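/- Let (W,S) be a Coxeter system with Coxeter matrix m and let T ⊆ S be such that for every t ∈ T and s ∈ S∖T the exponent m_{st} is even or ∞. Let u ∈ ker φ_T and let s_1 s_2 ⋯ s_k be a reduced word in S representing u. Let n be the number of indices i with s_i ∈ T. Then n equals the minimal length of an expression of u as a product of elements of S_T; that is, the word length of u with respect to the generating set S_T equals the number of letters from T in any reduced S-word for u. -/

import Mathlib

namespace LengthInKernelAux

open List CoxeterSystem

attribute [local instance] Classical.propDecidable

variable {B W : Type*} [Group W] {M : CoxeterMatrix B} (cs : CoxeterSystem M W)

/-! ### A permutation representation detecting inversions -/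

/-- The underlying function of the reflection-sign permutation attached to an involution `x`. -/
noncomputable def eFun (x : W) : W × ℤˣ → W × ℤˣ :=
  fun p => (x * p.1 * x, p.2 * (if p.1 = x then -1 else 1))

lemma conj_conj {x : W} (hx : x * x = 1) (t : W) : x * (x * t * x) * x = t := by
  calc x * (x * t * x) * x = (x * x) * t * (x * x) := by group
  _ = t := by rw [hx]; group

lemma eFun_involutive (x : W) (hx : x * x = 1) : Function.Involutive (eFun x) := by
  rintro ⟨t, ε⟩
  simp only [eFun]
  by_cases h : t = x
  · subst h
    have h1 : t * t * t = t := by rw [hx, one_mul]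
    simp [h1, mul_neg, neg_neg, mul_one]
  · have h2 : x * t * x ≠ x := by
      intro hc
      apply h
      have h3 : x * (x * t * x) * x = x * x * x := by rw [hc]
      rw [conj_conj hx, hx, one_mul] at h3
      exact h3
    simp [h, h2, conj_conj hx]

/-- The reflection-sign permutation attached to an involution `x`. -/
noncomputable def refPerm (x : W) (hx : x * x = 1) : Equiv.Perm (W × ℤˣ) :=
  (eFun_involutive x hx).toPerm

lemma refPerm_apply (x : W) (hx : x * x = 1) (t : W) (ε : ℤˣ) :
    refPerm x hx (t, ε) = (x * t * x, ε * (if t = x then -1 else 1)) := rfl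

section TwoGen

variable {a b : W} (ha : a * a = 1) (hb : b * b = 1)

include ha hb

lemma two_gen_conj_pow (r : ℕ) : b * (a * b) ^ r * b = ((a * b) ^ r)⁻¹ := by
  have binv : b⁻¹ = b := inv_eq_of_mul_eq_one_right hb
  have ainv : a⁻¹ = a := inv_eq_of_mul_eq_one_right ha
  induction r with
  | zero => simpa using hb
  | succ r ih =>
    have h2 : b * (a * b) * b = (a * b)⁻¹ := by
      have h3 : b * (a * b) * b = b * a * (b * b) := by group
      rw [h3, hb, mul_one, mul_inv_rev, binv, ainv]
    have expand : (b * (a * b) ^ r * b) * (b * (a * b) * b) = b * (a * b) ^ (r + 1) * b := by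
      have e1 : (b * (a * b) ^ r * b) * (b * (a * b) * b)
          = b * (a * b) ^ r * ((b * b) * ((a * b) * b)) := by group
      rw [e1, hb, one_mul, pow_succ]
      group
    rw [← expand, ih, h2, ← mul_inv_rev, ← pow_succ']

lemma two_gen_conj_pow' (r : ℕ) :
    ((a * b) ^ r)⁻¹ * b * (a * b) ^ r = b * (a * b) ^ (2 * r) := by
  have h := two_gen_conj_pow ha hb r
  calc ((a * b) ^ r)⁻¹ * b * (a * b) ^ r
      = (b * (a * b) ^ r * b) * b * (a * b) ^ r := by rw [h]
    _ = b * (a * b) ^ r * ((b * b) * (a * b) ^ r) := by group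
    _ = b * ((a * b) ^ r * (a * b) ^ r) := by rw [hb]; group
    _ = b * (a * b) ^ (2 * r) := by rw [two_mul, pow_add]

lemma two_gen_cond1 (r : ℕ) (t : W) :
    (a * b) ^ r * t * ((a * b) ^ r)⁻¹ = b ↔ b * t = (a * b) ^ (2 * r) := by
  constructor
  · intro h
    have e : t = ((a * b) ^ r)⁻¹ * ((a * b) ^ r * t * ((a * b) ^ r)⁻¹) * (a * b) ^ r := by
      group
    rw [h] at e
    rw [e, two_gen_conj_pow' ha hb, ← mul_assoc, hb, one_mul]
  · intro h
    have ht : t = b * (a * b) ^ (2 * r) := by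
      have := congrArg (fun z => b * z) h
      simpa [← mul_assoc, hb] using this
    rw [ht, ← two_gen_conj_pow' ha hb]
    group

lemma two_gen_key (r : ℕ) :
    ((a * b) ^ r)⁻¹ * (b * a * b) * (a * b) ^ r = b * (a * b) ^ (2 * r + 1) := by
  calc ((a * b) ^ r)⁻¹ * (b * a * b) * (a * b) ^ r
      = ((a * b) ^ r)⁻¹ * b * ((a * b) * (a * b) ^ r) := by simp only [mul_assoc]
    _ = ((a * b) ^ r)⁻¹ * b * ((a * b) ^ r * (a * b)) := by rw [← pow_succ', pow_succ]
    _ = (((a * b) ^ r)⁻¹ * b * (a * b) ^ r) * (a * b) := by simp only [mul_assoc]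
    _ = b * (a * b) ^ (2 * r) * (a * b) := by rw [two_gen_conj_pow' ha hb]
    _ = b * (a * b) ^ (2 * r + 1) := by rw [pow_succ, mul_assoc]

lemma two_gen_cond2 (r : ℕ) (t : W) :
    b * ((a * b) ^ r * t * ((a * b) ^ r)⁻¹) * b = a ↔ b * t = (a * b) ^ (2 * r + 1) := by
  constructor
  · intro h
    have h1 : (a * b) ^ r * t * ((a * b) ^ r)⁻¹ = b * a * b := by
      have h3 : b * (b * ((a * b) ^ r * t * ((a * b) ^ r)⁻¹) * b) * b = b * a * b := by rw [h]
      rwa [conj_conj hb] at h3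
    have e : t = ((a * b) ^ r)⁻¹ * ((a * b) ^ r * t * ((a * b) ^ r)⁻¹) * (a * b) ^ r := by
      group
    rw [h1] at e
    rw [e, two_gen_key ha hb, ← mul_assoc, hb, one_mul]
  · intro h
    have ht : t = b * (a * b) ^ (2 * r + 1) := by
      have := congrArg (fun z => b * z) h
      simpa [← mul_assoc, hb] using this
    have ht' : t = ((a * b) ^ r)⁻¹ * (b * a * b) * (a * b) ^ r :=
      ht.trans (two_gen_key ha hb r).symm
    have h1 : (a * b) ^ r * t * ((a * b) ^ r)⁻¹ = b * a * b := by rw [ht']; group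
    rw [h1]
    exact conj_conj hb a

lemma refPerm_mul_pow_apply (k : ℕ) (t : W) (ε : ℤˣ) :
    ((refPerm a ha * refPerm b hb) ^ k) (t, ε) =
      ((a * b) ^ k * t * ((a * b) ^ k)⁻¹,
        ε * ∏ r ∈ Finset.range k,
          ((if b * t = (a * b) ^ (2 * r) then (-1 : ℤˣ) else 1) *
            (if b * t = (a * b) ^ (2 * r + 1) then (-1 : ℤˣ) else 1))) := by
  have hba : (a * b)⁻¹ = b * a := by
    rw [mul_inv_rev, inv_eq_of_mul_eq_one_right hb, inv_eq_of_mul_eq_one_right ha]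
  induction k with
  | zero => simp
  | succ k ih =>
    rw [pow_succ', Equiv.Perm.mul_apply, ih, Equiv.Perm.mul_apply, refPerm_apply, refPerm_apply]
    simp only [Prod.mk.injEq]
    constructor
    · calc a * (b * ((a * b) ^ k * t * ((a * b) ^ k)⁻¹) * b) * a
          = (a * b) * ((a * b) ^ k * t * ((a * b) ^ k)⁻¹) * (b * a) := by
            simp only [mul_assoc]
        _ = (a * b) * ((a * b) ^ k * t * ((a * b) ^ k)⁻¹) * (a * b)⁻¹ := by rw [hba]
        _ = (a * b) ^ (k + 1) * t * ((a * b) ^ (k + 1))⁻¹ := by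
            simp only [pow_succ', mul_inv_rev, mul_assoc]
    · rw [Finset.prod_range_succ]
      simp only [two_gen_cond1 ha hb, two_gen_cond2 ha hb]
      simp only [mul_assoc]

lemma refPerm_braid (m : ℕ) (hm : (a * b) ^ m = 1) :
    (refPerm a ha * refPerm b hb) ^ m = 1 := by
  apply Equiv.ext
  rintro ⟨t, ε⟩
  rw [refPerm_mul_pow_apply ha hb m t ε]
  have h1 : ∀ n : ℕ,
      (∏ r ∈ Finset.range n,
        ((if b * t = (a * b) ^ (2 * r) then (-1 : ℤˣ) else 1) *
          (if b * t = (a * b) ^ (2 * r + 1) then (-1 : ℤˣ) else 1))) =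
      ∏ x ∈ Finset.range (2 * n), (if b * t = (a * b) ^ x then (-1 : ℤˣ) else 1) := by
    intro n
    induction n with
    | zero => simp
    | succ n ih =>
      rw [Finset.prod_range_succ, ih]
      have h2 : 2 * (n + 1) = (2 * n + 1) + 1 := by ring
      rw [h2, Finset.prod_range_succ, Finset.prod_range_succ, mul_assoc]
  have hprod : (∏ r ∈ Finset.range m,
      ((if b * t = (a * b) ^ (2 * r) then (-1 : ℤˣ) else 1) *
        (if b * t = (a * b) ^ (2 * r + 1) then (-1 : ℤˣ) else 1))) = 1 := by
    rw [h1 m, two_mul, Finset.prod_range_add]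
    have h2 : ∀ x : ℕ, (if b * t = (a * b) ^ (m + x) then (-1 : ℤˣ) else 1)
        = (if b * t = (a * b) ^ x then (-1 : ℤˣ) else 1) := by
      intro x; rw [pow_add, hm, one_mul]
    rw [Finset.prod_congr rfl (fun x _ => h2 x)]
    exact Int.units_mul_self _
  rw [hprod, hm, mul_one]
  simp

end TwoGen

/-! ### The permutation representation of the Coxeter group -/

noncomputable def pRep : W →* Equiv.Perm (W × ℤˣ) :=
  cs.lift ⟨fun i => refPerm (cs.simple i) (cs.simple_mul_simple_self i), by
    intro i j
    exact refPerm_braid (cs.simple_mul_simple_self i) (cs.simple_mul_simple_self j) (M i j)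
      (cs.simple_mul_simple_pow i j)⟩

lemma pRep_simple (i : B) :
    pRep cs (cs.simple i) = refPerm (cs.simple i) (cs.simple_mul_simple_self i) :=
  cs.lift_apply_simple _ i

lemma pRep_wordProd [DecidableEq W] (ω : List B) (t : W) (ε : ℤˣ) :
    pRep cs (cs.wordProd ω) (t, ε) =
      (cs.wordProd ω * t * (cs.wordProd ω)⁻¹,
        ε * (-1 : ℤˣ) ^ ((cs.rightInvSeq ω).count t)) := by
  induction ω with
  | nil => simp
  | cons i ω ih =>
    rw [wordProd_cons, map_mul, Equiv.Perm.mul_apply, ih, pRep_simple, refPerm_apply]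
    have hris : cs.rightInvSeq (i :: ω)
        = ((cs.wordProd ω)⁻¹ * cs.simple i * cs.wordProd ω) :: cs.rightInvSeq ω := rfl
    rw [hris, List.count_cons]
    simp only [Prod.mk.injEq]
    have hcond : (cs.wordProd ω * t * (cs.wordProd ω)⁻¹ = cs.simple i)
        ↔ ((cs.wordProd ω)⁻¹ * cs.simple i * cs.wordProd ω = t) := by
      constructor
      · intro h
        rw [← h]; group
      · intro h
        rw [← h]; group
    constructor
    · simp only [mul_inv_rev, cs.inv_simple, mul_assoc]
    · simp only [beq_iff_eq]
      by_cases h : (cs.wordProd ω)⁻¹ * cs.simple i * cs.wordProd ω = t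
      · rw [if_pos (hcond.mpr h), if_pos h, pow_succ, mul_assoc]
      · rw [if_neg (fun hc => h (hcond.mp hc)), if_neg h, add_zero, mul_one]

lemma eta_conj (η : W →* ℤˣ) (v t : W) : η (v * t * v⁻¹) = η t := by
  rw [map_mul, map_mul, map_inv, mul_comm (η v) (η t), mul_inv_cancel_right]

/-- The set of `T`-type inversions of `w`. -/
noncomputable def sgnSet (η : W →* ℤˣ) (w : W) : Set W :=
  {t : W | (pRep cs w (t, 1)).2 = -1 ∧ η t = -1}

/-- The number of `T`-type inversions of `w`. -/
noncomputable def nu (η : W →* ℤˣ) (w : W) : ℕ := (sgnSet cs η w).ncard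

lemma pRep_apply' (w t : W) (ε : ℤˣ) :
    pRep cs w (t, ε) = (w * t * w⁻¹, ε * (pRep cs w (t, 1)).2) := by
  classical
  obtain ⟨ω, rfl⟩ := cs.wordProd_surjective w
  rw [pRep_wordProd, pRep_wordProd]
  simp

lemma sgn_one (t : W) : (pRep cs (1 : W) (t, 1)).2 = 1 := by
  rw [map_one]
  simp

lemma sgn_mul (u v t : W) :
    (pRep cs (u * v) (t, 1)).2 = (pRep cs v (t, 1)).2 * (pRep cs u (v * t * v⁻¹, 1)).2 := by
  have h : pRep cs (u * v) (t, 1) = pRep cs u (pRep cs v (t, 1)) := by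
    rw [map_mul, Equiv.Perm.mul_apply]
  rw [h, pRep_apply' cs v t 1, pRep_apply' cs u]

lemma sgn_inv (w t : W) :
    (pRep cs w⁻¹ (t, 1)).2 = (pRep cs w (w⁻¹ * t * w, 1)).2 := by
  have h := sgn_mul cs w w⁻¹ t
  rw [mul_inv_cancel, inv_inv, sgn_one] at h
  have h3 : (pRep cs w⁻¹ (t, 1)).2 *
      ((pRep cs w⁻¹ (t, 1)).2 * (pRep cs w (w⁻¹ * t * w, 1)).2) =
      (pRep cs w⁻¹ (t, 1)).2 * 1 := by rw [← h]
  rw [← mul_assoc, Int.units_mul_self, one_mul, mul_one] at h3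
  exact h3.symm

lemma sgnSet_wordProd [DecidableEq W] (η : W →* ℤˣ) {ω : List B} (hred : cs.IsReduced ω) :
    sgnSet cs η (cs.wordProd ω)
      = {t : W | t ∈ (cs.rightInvSeq ω).filter (fun t => decide (η t = -1))} := by
  ext t
  simp only [sgnSet, Set.mem_setOf_eq, List.mem_filter, decide_eq_true_eq]
  have h2 : (pRep cs (cs.wordProd ω) (t, 1)).2 = (-1 : ℤˣ) ^ ((cs.rightInvSeq ω).count t) := by
    rw [pRep_wordProd]
    simp
  rw [h2]
  by_cases ht : t ∈ cs.rightInvSeq ω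
  · rw [List.count_eq_one_of_mem (hred.nodup_rightInvSeq) ht]
    simp [ht]
  · rw [List.count_eq_zero_of_not_mem ht, pow_zero]
    constructor
    · rintro ⟨h1, -⟩
      exact absurd h1 (by decide)
    · rintro ⟨h1, -⟩
      exact absurd h1 ht

lemma sgnSet_finite (η : W →* ℤˣ) (w : W) : (sgnSet cs η w).Finite := by
  classical
  obtain ⟨ω, hred, rfl⟩ := cs.exists_reduced_word' w
  rw [sgnSet_wordProd cs η hred]
  exact ((cs.rightInvSeq ω).filter (fun t => decide (η t = -1))).finite_toSet

lemma nu_eq_countP [DecidableEq W] (η : W →* ℤˣ) {ω : List B} (hred : cs.IsReduced ω) :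
    nu cs η (cs.wordProd ω) = (cs.rightInvSeq ω).countP (fun t => decide (η t = -1)) := by
  rw [nu, sgnSet_wordProd cs η hred, ← List.coe_toFinset, Set.ncard_coe_finset,
    List.toFinset_card_of_nodup
      (List.Nodup.filter _ (CoxeterSystem.IsReduced.nodup_rightInvSeq cs hred)),
    List.countP_eq_length_filter]

lemma conj_injective (v : W) : Function.Injective (fun t : W => v⁻¹ * t * v) := by
  have h1 : ∀ x : W, v * (v⁻¹ * x * v) * v⁻¹ = x := by intro x; group
  intro x y hxy
  rw [← h1 x, ← h1 y]
  simpa using congrArg (fun z => v * z * v⁻¹) hxy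

lemma nu_mul_le (η : W →* ℤˣ) (u v : W) : nu cs η (u * v) ≤ nu cs η u + nu cs η v := by
  have hsub : sgnSet cs η (u * v) ⊆
      ((fun t => v⁻¹ * t * v) '' sgnSet cs η u) ∪ sgnSet cs η v := by
    rintro t ⟨h1, h2⟩
    rw [sgn_mul cs u v t] at h1
    rcases Int.units_eq_one_or (pRep cs v (t, 1)).2 with hv | hv
    · left
      refine ⟨v * t * v⁻¹, ⟨?_, ?_⟩, by group⟩
      · rw [hv, one_mul] at h1
        exact h1
      · rw [eta_conj]
        exact h2
    · right
      exact ⟨hv, h2⟩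
  calc nu cs η (u * v)
      ≤ (((fun t => v⁻¹ * t * v) '' sgnSet cs η u) ∪ sgnSet cs η v).ncard :=
        Set.ncard_le_ncard hsub
          (((sgnSet_finite cs η u).image _).union (sgnSet_finite cs η v))
    _ ≤ ((fun t => v⁻¹ * t * v) '' sgnSet cs η u).ncard + (sgnSet cs η v).ncard :=
        Set.ncard_union_le _ _
    _ = nu cs η u + nu cs η v := by
        rw [Set.ncard_image_of_injective _ (conj_injective v)]
        rfl

lemma nu_inv (η : W →* ℤˣ) (w : W) : nu cs η w⁻¹ = nu cs η w := by
  have hset : sgnSet cs η w⁻¹ = (fun t : W => w * t * w⁻¹) '' sgnSet cs η w := by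
    ext t
    constructor
    · rintro ⟨h1, h2⟩
      refine ⟨w⁻¹ * t * w, ⟨?_, ?_⟩, by group⟩
      · rw [← sgn_inv cs w t]
        exact h1
      · have he := eta_conj η w⁻¹ t
        rw [inv_inv] at he
        rw [he]
        exact h2
    · rintro ⟨x, ⟨h1, h2⟩, rfl⟩
      constructor
      · rw [sgn_inv cs w (w * x * w⁻¹)]
        have e : w⁻¹ * (w * x * w⁻¹) * w = x := by group
        rw [e]
        exact h1
      · rw [eta_conj]
        exact h2
  have hinj : Function.Injective (fun t : W => w * t * w⁻¹) := by
    have h1 : ∀ x : W, w⁻¹ * (w * x * w⁻¹) * w = x := by intro x; group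
    intro x y hxy
    rw [← h1 x, ← h1 y]
    simpa using congrArg (fun z => w⁻¹ * z * w) hxy
  rw [nu, nu, hset, Set.ncard_image_of_injective _ hinj]

lemma nu_one (η : W →* ℤˣ) : nu cs η (1 : W) = 0 := by
  have hset : sgnSet cs η 1 = ∅ := by
    ext t
    simp only [sgnSet, Set.mem_setOf_eq, Set.mem_empty_iff_false, iff_false, not_and]
    intro h1
    rw [sgn_one] at h1
    exact absurd h1 (by decide)
  rw [nu, hset, Set.ncard_empty]

lemma nu_simple (η : W →* ℤˣ) (i : B) :
    nu cs η (cs.simple i) = if η (cs.simple i) = -1 then 1 else 0 := by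
  classical
  have hred : cs.IsReduced [i] := by
    simp [CoxeterSystem.IsReduced, cs.length_simple]
  have h := nu_eq_countP cs η hred
  rw [wordProd_singleton] at h
  rw [h, cs.rightInvSeq_singleton, List.countP_cons, List.countP_nil]
  by_cases hi : η (cs.simple i) = -1 <;> simp [hi]

lemma nu_closure_zero (η : W →* ℤˣ) (X : Set W) (hX : ∀ x ∈ X, nu cs η x = 0) :
    ∀ w ∈ Subgroup.closure X, nu cs η w = 0 := by
  intro w hw
  induction hw using Subgroup.closure_induction with
  | mem x hx => exact hX x hx
  | one => exact nu_one cs η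
  | mul x y hx hy ihx ihy =>
      have := nu_mul_le cs η x y
      omega
  | inv x hx ihx => rw [nu_inv]; exact ihx

lemma countP_ris (T : Set B) [DecidablePred (· ∈ T)] (η : W →* ℤˣ)
    (hη : ∀ b : B, η (cs.simple b) = if b ∈ T then -1 else 1) (ω : List B) :
    (cs.rightInvSeq ω).countP (fun t => decide (η t = -1))
      = ω.countP (fun i => decide (i ∈ T)) := by
  induction ω with
  | nil => rfl
  | cons i ω ih =>
    have hris : cs.rightInvSeq (i :: ω)
        = ((cs.wordProd ω)⁻¹ * cs.simple i * cs.wordProd ω) :: cs.rightInvSeq ω := rfl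
    have hconj : η ((cs.wordProd ω)⁻¹ * cs.simple i * cs.wordProd ω) = η (cs.simple i) := by
      have h := eta_conj η (cs.wordProd ω)⁻¹ (cs.simple i)
      rwa [inv_inv] at h
    rw [hris, List.countP_cons, List.countP_cons, ih, hconj, hη i]
    have hne : ((1 : ℤˣ) ≠ -1) := by decide
    by_cases hi : i ∈ T
    · simp [hi]
    · simp [hi, hne]

lemma phi_mem_closure (T : Set B) (φ : W →* W)
    (hφ₁ : ∀ s ∉ T, φ (cs.simple s) = cs.simple s)
    (hφ₂ : ∀ t ∈ T, φ (cs.simple t) = 1) (v : W) :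
    φ v ∈ Subgroup.closure (cs.simple '' Tᶜ) := by
  induction v using cs.simple_induction_left with
  | one =>
    rw [map_one]
    exact one_mem _
  | mul_simple_left w i ih =>
    rw [map_mul]
    by_cases hi : i ∈ T
    · rw [hφ₂ i hi, one_mul]
      exact ih
    · rw [hφ₁ i hi]
      exact mul_mem (Subgroup.subset_closure ⟨i, hi, rfl⟩) ih

lemma exists_list (T : Set B) [DecidablePred (· ∈ T)] (φ : W →* W)
    (hφ₁ : ∀ s ∉ T, φ (cs.simple s) = cs.simple s)
    (hφ₂ : ∀ t ∈ T, φ (cs.simple t) = 1) (ω : List B) :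
    ∃ l : List W, (∀ x ∈ l, ∃ t ∈ T, ∃ w ∈ Subgroup.closure (cs.simple '' Tᶜ),
        x = w * cs.simple t * w⁻¹) ∧
      l.prod * φ (cs.wordProd ω) = cs.wordProd ω ∧
      l.length = ω.countP (fun i => decide (i ∈ T)) := by
  induction ω using List.reverseRecOn with
  | nil => exact ⟨[], by simp, by simp, by simp⟩
  | append_singleton ω i ih =>
    obtain ⟨l, hmem, hprod, hlen⟩ := ih
    by_cases hi : i ∈ T
    · refine ⟨l ++ [φ (cs.wordProd ω) * cs.simple i * (φ (cs.wordProd ω))⁻¹], ?_, ?_, ?_⟩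
      · intro x hx
        rcases List.mem_append.mp hx with hx | hx
        · exact hmem x hx
        · rw [List.mem_singleton] at hx
          subst hx
          exact ⟨i, hi, φ (cs.wordProd ω), phi_mem_closure cs T φ hφ₁ hφ₂ _, rfl⟩
      · rw [List.prod_append, List.prod_singleton]
        have hφω : φ (cs.wordProd (ω ++ [i])) = φ (cs.wordProd ω) := by
          rw [wordProd_append, map_mul, wordProd_singleton, hφ₂ i hi, mul_one]
        rw [hφω, wordProd_append, wordProd_singleton]
        calc l.prod * (φ (cs.wordProd ω) * cs.simple i * (φ (cs.wordProd ω))⁻¹)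
              * φ (cs.wordProd ω)
            = l.prod * φ (cs.wordProd ω) * cs.simple i := by group
          _ = cs.wordProd ω * cs.simple i := by rw [hprod]
      · rw [List.length_append, List.countP_append, hlen]
        simp [hi]
    · refine ⟨l, hmem, ?_, ?_⟩
      · have hφω : φ (cs.wordProd (ω ++ [i])) = φ (cs.wordProd ω) * cs.simple i := by
          rw [wordProd_append, map_mul, wordProd_singleton, hφ₁ i hi]
        rw [hφω, wordProd_append, wordProd_singleton, ← mul_assoc, hprod]
      · rw [hlen, List.countP_append]
        simp [hi]

end LengthInKernelAux

open LengthInKernelAux in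
/-- Under the evenness assumption on `T ⊆ S`, let `u ∈ ker φ_T` and let `ω` be a reduced word in
`S` representing `u`. Then the number `n` of letters of `ω` lying in `T` equals the word length of
`u` with respect to the generating set `S_T = {w t w⁻¹ : t ∈ T, w ∈ W_{S∖T}}`: there is a product
of `n` elements of `S_T` equal to `u`, and no shorter such product. -/
theorem length_in_kernel_eq_count {B W : Type*} [Group W] (M : CoxeterMatrix B)
    (cs : CoxeterSystem M W) (T : Set B) [DecidablePred (· ∈ T)]
    (heven : ∀ t ∈ T, ∀ s ∉ T, Even (M t s))
    (φ : W →* W)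
    (hφ₁ : ∀ s ∉ T, φ (cs.simple s) = cs.simple s)
    (hφ₂ : ∀ t ∈ T, φ (cs.simple t) = 1)
    (u : W) (hu : u ∈ φ.ker)
    (ω : List B) (hred : cs.IsReduced ω) (hωu : cs.wordProd ω = u) :
    (∃ l : List W,
        (∀ x ∈ l, x ∈ {x : W | ∃ t ∈ T, ∃ w ∈ Subgroup.closure (cs.simple '' Tᶜ),
          x = w * cs.simple t * w⁻¹}) ∧
        l.prod = u ∧ l.length = ω.countP (fun i => decide (i ∈ T))) ∧
    (∀ l : List W,
        (∀ x ∈ l, x ∈ {x : W | ∃ t ∈ T, ∃ w ∈ Subgroup.closure (cs.simple '' Tᶜ),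
          x = w * cs.simple t * w⁻¹}) →
        l.prod = u → ω.countP (fun i => decide (i ∈ T)) ≤ l.length) := by
  classical
  have hlift : M.IsLiftable (fun i : B => if i ∈ T then (-1 : ℤˣ) else 1) := by
    intro i j
    by_cases hi : i ∈ T <;> by_cases hj : j ∈ T
    · simp only [if_pos hi, if_pos hj]
      have h1 : ((-1 : ℤˣ) * -1) = 1 := by decide
      rw [h1, one_pow]
    · simp only [if_pos hi, if_neg hj]
      rw [mul_one]
      exact (heven i hi j hj).neg_one_pow
    · simp only [if_neg hi, if_pos hj]
      rw [one_mul, M.symmetric i j]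
      exact (heven j hj i hi).neg_one_pow
    · simp only [if_neg hi, if_neg hj]
      rw [mul_one, one_pow]
  set η : W →* ℤˣ := cs.lift ⟨fun i : B => if i ∈ T then (-1 : ℤˣ) else 1, hlift⟩ with hηdef
  have hη : ∀ b : B, η (cs.simple b) = if b ∈ T then -1 else 1 := fun b =>
    cs.lift_apply_simple hlift b
  constructor
  · obtain ⟨l, hmem, hprod, hlen⟩ := exists_list cs T φ hφ₁ hφ₂ ω
    refine ⟨l, fun x hx => hmem x hx, ?_, hlen⟩
    have hk : φ u = 1 := hu
    rw [hωu, hk, mul_one] at hprod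
    exact hprod
  · intro l hl hlp
    have hx1 : ∀ x ∈ l, nu cs η x ≤ 1 := by
      intro x hx
      obtain ⟨t, ht, w, hw, rfl⟩ := hl x hx
      have hX : ∀ y ∈ cs.simple '' Tᶜ, nu cs η y = 0 := by
        rintro y ⟨b, hb, rfl⟩
        rw [nu_simple cs η b, hη b, if_neg hb]
        have hne : ((1 : ℤˣ) ≠ -1) := by decide
        rw [if_neg hne]
      have h0 : nu cs η w = 0 := nu_closure_zero cs η _ hX w hw
      have h1 := nu_mul_le cs η (w * cs.simple t) w⁻¹
      have h2 := nu_mul_le cs η w (cs.simple t)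
      have h3 : nu cs η (cs.simple t) ≤ 1 := by
        rw [nu_simple cs η t]
        split <;> omega
      have h4 : nu cs η w⁻¹ = 0 := by rw [nu_inv]; exact h0
      omega
    have hlen : ∀ l' : List W, (∀ x ∈ l', nu cs η x ≤ 1) → nu cs η l'.prod ≤ l'.length := by
      intro l'
      induction l' with
      | nil =>
        intro _
        simpa using (nu_one cs η).le
      | cons x l' ih =>
        intro h
        have h1 := nu_mul_le cs η x l'.prod
        have h2 := ih (fun y hy => h y (List.mem_cons_of_mem x hy))
        have h3 := h x (List.mem_cons_self (a := x) (l := l'))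
        rw [List.prod_cons, List.length_cons]
        omega
    have hb := hlen l hx1
    rw [hlp] at hb
    have hcount : ω.countP (fun i => decide (i ∈ T)) = nu cs η u := by
      rw [← hωu, nu_eq_countP cs η hred, countP_ris cs T η hη ω]
    rw [hcount]
    exact hb
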